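/- In a strongly connected component H with entrances b_1,...,b_{n1} and exits b'_1,...,b'_{n2} appearing in counterclockwise order b_1,...,b_{n1},b'_1,...,b'_{n2} along its boundary cycle, any simple path P inside H from some entrance b_i to some exit b'_j can be extended, using boundary arcs from b_1 to b_i and from b'_j to b'_{n2}, to a simple path from b_1 to b'_{n2} inside H containing P. -/

import Mathlib

/-!
Directed graphs are modelled by an arc relation `A : V → V → Prop`.
A simple directed path is a `List V` that is `Chain' A`, has no repeated
vertices, and has prescribed first and last vertices.
-/

variable {V : Type*}

/-- `l` is a simple directed path from `s` to `t` in the digraph with arcs `A`. -/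
def IsPathFrom (A : V → V → Prop) (s t : V) (l : List V) : Prop :=
  l.Chain' A ∧ l.Nodup ∧ l.head? = some s ∧ l.getLast? = some t

/-- The arc `(u,v)` is useful w.r.t. `s,t`: some simple `s,t`-path contains it
(i.e. `u,v` appear consecutively on the path). -/
def ArcUseful (A : V → V → Prop) (s t u v : V) : Prop :=
  ∃ l : List V, IsPathFrom A s t l ∧ [u, v] <:+: l

/-- The path `P` is useful w.r.t. `s,t`: some simple `s,t`-path contains it
as a (consecutive) subpath. -/
def PathUseful (A : V → V → Prop) (s t : V) (P : List V) : Prop :=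
  ∃ l : List V, IsPathFrom A s t l ∧ P <:+: l

/-- `l` is a (simple) directed cycle: a nonempty duplicate-free list whose
consecutive members are arcs, together with the wrap-around arc. -/
def IsCycle (A : V → V → Prop) (l : List V) : Prop :=
  l ≠ [] ∧ l.Nodup ∧ l.Chain' A ∧ ∀ h : l ≠ [], A (l.getLast h) (l.head h)

/-- The cycle (given as a list) `l` contains the arc `(u,v)`. -/
def CycleHasArc (l : List V) (u v : V) : Prop :=
  [u, v] <:+: l ∨ ∃ h : l ≠ [], l.getLast h = u ∧ l.head h = v

private lemma pair_sublist {a b : V} : ∀ {l : List V}, List.Sublist [a, b] l →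
    ∃ s t u, l = s ++ a :: t ++ b :: u := by
  intro l h
  induction l with
  | nil => simp at h
  | cons c l ih =>
    cases h with
    | cons _ h' =>
      obtain ⟨s, t, u, rfl⟩ := ih h'
      exact ⟨c :: s, t, u, rfl⟩
    | cons_cons _ h' =>
      obtain ⟨t, u, rfl⟩ := List.append_of_mem (List.singleton_sublist.mp h')
      exact ⟨[], t, u, rfl⟩

private lemma append_cons_inj {a : V} : ∀ (p : List V) {p' q q' : List V},
    p ++ a :: q = p' ++ a :: q' → a ∉ p → a ∉ p' → p = p' ∧ q = q' := by
  intro p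
  induction p with
  | nil =>
    intro p' q q' h ha ha'
    cases p' with
    | nil => simpa using h
    | cons c p' =>
      simp only [List.nil_append, List.cons_append, List.cons.injEq] at h
      obtain ⟨rfl, -⟩ := h
      simp at ha'
  | cons c p ih =>
    intro p' q q' h ha ha'
    cases p' with
    | nil =>
      simp only [List.nil_append, List.cons_append, List.cons.injEq] at h
      obtain ⟨rfl, -⟩ := h
      simp at ha
    | cons d p' =>
      simp only [List.cons_append, List.cons.injEq] at h
      obtain ⟨rfl, h2⟩ := h
      obtain ⟨h3, h4⟩ := ih h2 (fun hm => ha (List.mem_cons_of_mem _ hm))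
        (fun hm => ha' (List.mem_cons_of_mem _ hm))
      exact ⟨by rw [h3], h4⟩


/-- let `H` be a strongly connected plane component whose
boundary is a (counterclockwise) directed cycle `Q`, and let the entrances
`E = [b_1,…,b_{n1}]` and exits `X = [b'_1,…,b'_{n2}]` appear, non-interleaved,
in this order along `Q` (expressed by `E ++ X` being a sublist of the rotation
`Qr` of `Q` starting at the first entrance `b1`).  Then any simple path `P`
inside `H` from an entrance `bi` to an exit `bj`, whose only boundary vertices
are its endpoints, can be extended by boundary arcs from `b1` to `bi` and from
`bj` to the last exit `bn` into a simple path inside `H` from `b1` to `bn`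
containing `P`. -/
theorem extend_path_along_boundary
    (A : V → V → Prop) (H : Set V)
    (Q Qr E X : List V) (b1 bn bi bj : V)
    (hQ : IsCycle A Q) (hQH : ∀ x ∈ Q, x ∈ H)
    (hQr : IsCycle A Qr) (hrot : Q.IsRotated Qr)
    (hsub : List.Sublist (E ++ X) Qr)
    (hhead : Qr.head? = some b1)
    (hb1 : E.head? = some b1) (hbn : X.getLast? = some bn)
    (hbi : bi ∈ E) (hbj : bj ∈ X) (hij : bi ≠ bj)
    (P : List V)
    (hP : IsPathFrom A bi bj P) (hPH : ∀ x ∈ P, x ∈ H)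
    (hPint : ∀ x ∈ P, x ∈ Q → x = bi ∨ x = bj) :
    ∃ L : List V, IsPathFrom A b1 bn L ∧ P <:+: L ∧ ∀ x ∈ L, x ∈ H := by
  obtain ⟨hPc, hPn, hPh, hPl⟩ := hP
  have hPne : P ≠ [] := fun h => by simp [h] at hPh
  have hnQr := hQr.2.1
  have hcQr := hQr.2.2.1
  have hij' : List.Sublist [bi, bj] Qr :=
    (((List.singleton_sublist.mpr hbi).append (List.singleton_sublist.mpr hbj)).trans hsub)
  obtain ⟨s, t, u, hdec⟩ := pair_sublist hij'
  -- extract nodup facts;  hdec : Qr = (s ++ bi :: t) ++ bj :: u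
  have hn := hnQr
  rw [hdec, List.nodup_append] at hn
  obtain ⟨hn1, hn2, hdA⟩ := hn
  rw [List.nodup_append] at hn1
  obtain ⟨hns, hn1b, hdB⟩ := hn1
  rw [List.nodup_cons] at hn2
  obtain ⟨hbj_nu, hnu⟩ := hn2
  have hbi_ns : bi ∉ s := fun h => hdB _ h _ List.mem_cons_self rfl
  have hbj_ns : bj ∉ s := fun h => hdA _ (List.mem_append.mpr (Or.inl h)) _ List.mem_cons_self rfl
  have hbi_nu : bi ∉ u := fun h => hdA _ (List.mem_append.mpr (Or.inr List.mem_cons_self)) _ (List.mem_cons_of_mem _ h) rfl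
  have hdsu : ∀ x ∈ s, x ∉ u := fun x hx hxu => hdA _ (List.mem_append.mpr (Or.inl hx)) _ (List.mem_cons_of_mem _ hxu) rfl
  -- decompose the tail after bj so that it ends with bn
  obtain ⟨post, u2, hu, hpostlast⟩ :
      ∃ post u2, u = post ++ u2 ∧ (bj :: post).getLast? = some bn := by
    by_cases hbjn : bj = bn
    · exact ⟨[], u, rfl, by simp [hbjn]⟩
    · obtain ⟨X', hX'⟩ := List.getLast?_eq_some_iff.mp hbn
      have hbjX' : bj ∈ X' := by
        rcases List.mem_append.mp (hX' ▸ hbj) with h | h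
        · exact h
        · simp at h; exact absurd h hbjn
      have h2 : List.Sublist [bj, bn] Qr := by
        have h3 : List.Sublist ([bj] ++ [bn]) (X' ++ [bn]) :=
          (List.singleton_sublist.mpr hbjX').append (List.Sublist.refl _)
        exact (h3.trans (hX' ▸ (List.sublist_append_right E X))).trans hsub
      obtain ⟨p, q, r, hdec2⟩ := pair_sublist h2
      have hbj_np : bj ∉ p := by
        have hn' := hnQr
        rw [hdec2, List.nodup_append, List.nodup_append] at hn'
        exact fun h => hn'.1.2.2 _ h _ List.mem_cons_self rfl
      have h3 : (s ++ bi :: t) ++ bj :: u = p ++ bj :: (q ++ bn :: r) := by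
        rw [← hdec, hdec2]; simp
      have hbj_nst : bj ∉ s ++ bi :: t := fun h => hdA _ h _ List.mem_cons_self rfl
      obtain ⟨-, h4⟩ := append_cons_inj _ h3 hbj_nst hbj_np
      exact ⟨q ++ [bn], r, by rw [h4, List.append_assoc, List.cons_append, List.nil_append],
        by rw [show bj :: (q ++ [bn]) = (bj :: q) ++ [bn] by simp, List.getLast?_concat]⟩
  have hpost_sub_u : ∀ x ∈ post, x ∈ u := fun x hx => by simp [hu, hx]
  -- chain facts
  have hc := hcQr
  rw [hdec] at hc; change List.IsChain A _ at hc; rw [List.isChain_append, List.isChain_append] at hc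
  obtain ⟨⟨hcs, -, hlink⟩, hcbju, -⟩ := hc
  have hcbjpost : List.Chain' A (bj :: post) :=
    hcbju.prefix ⟨u2, by simp [hu]⟩
  change List.IsChain A _ at hcbjpost; rw [List.isChain_cons] at hcbjpost
  obtain ⟨hbjlink, hcpost⟩ := hcbjpost
  have hnupost : post.Nodup := by
    rw [hu, List.nodup_append] at hnu; exact hnu.1
  -- membership transfers
  have hmemQ : ∀ x, x ∈ Qr → x ∈ Q := fun x hx => hrot.mem_iff.mpr hx
  have hsQ : ∀ x ∈ s, x ∈ Qr := fun x hx => by rw [hdec]; simp [hx]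
  have huQ : ∀ x ∈ u, x ∈ Qr := fun x hx => by rw [hdec]; simp [hx]
  refine ⟨s ++ (P ++ post), ⟨?_, ?_, ?_, ?_⟩, ⟨s, post, by rw [List.append_assoc]⟩, ?_⟩
  · -- Chain'
    change List.IsChain A _; rw [List.isChain_append]
    refine ⟨hcs, ?_, ?_⟩
    · rw [List.isChain_append]
      refine ⟨hPc, hcpost, fun x hx y hy => ?_⟩
      rw [hPl, Option.mem_some_iff] at hx
      subst hx
      exact hbjlink y hy
    · intro x hx y hy
      rw [List.head?_append, hPh,
        show (some bi).or post.head? = some bi from rfl, Option.mem_some_iff] at hy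
      subst hy
      exact hlink x hx bi (by simp)
  · -- Nodup
    rw [List.nodup_append]
    refine ⟨hns, ?_, ?_⟩
    · rw [List.nodup_append]
      refine ⟨hPn, hnupost, fun x hxP y hxpost hxy => ?_⟩
      subst hxy
      have hxu := hpost_sub_u x hxpost
      rcases hPint x hxP (hmemQ x (huQ x hxu)) with rfl | rfl
      · exact hbi_nu hxu
      · exact hbj_nu hxu
    · intro x hxs y hxPp hxy
      subst hxy
      rcases List.mem_append.mp hxPp with hxP | hxpost
      · rcases hPint x hxP (hmemQ x (hsQ x hxs)) with rfl | rfl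
        · exact hbi_ns hxs
        · exact hbj_ns hxs
      · exact hdsu x hxs (hpost_sub_u x hxpost)
  · -- head?
    rw [hdec, List.head?_append, List.head?_append, Option.or_assoc,
      show ((bi :: t).head?).or ((bj :: u).head?) = some bi from rfl] at hhead
    rw [List.head?_append, List.head?_append, hPh,
      show (some bi).or post.head? = some bi from rfl]
    exact hhead
  · -- getLast?
    cases post with
    | nil =>
      have hbjn : bj = bn := by simpa using hpostlast
      rw [List.append_nil, List.getLast?_append, hPl]
      simp [hbjn]
    | cons c post' =>
      have hlast : (c :: post').getLast? = some bn := by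
        rw [List.getLast?_cons_cons] at hpostlast
        exact hpostlast
      rw [List.getLast?_append, List.getLast?_append, hlast]
      simp
  · -- membership in H
    intro x hx
    rcases List.mem_append.mp hx with hxs | hx2
    · exact hQH x (hmemQ x (hsQ x hxs))
    · rcases List.mem_append.mp hx2 with hxP | hxpost
      · exact hPH x hxP
      · exact hQH x (hmemQ x (huQ x (hpost_sub_u x hxpost)))
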